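/- Under the stated assumptions, the set N^-(λ_c) is weakly bounded away from zero: there is no sequence (u_n) ⊂ N^-(λ_c) with u_n ⇀ 0 weakly in X. -/

import Mathlib

open Metric Set Filter Topology

/-- `H(u) = I₁'(u)u − α I₁(u)`. -/
noncomputable def Hfun {X : Type*} [NormedAddCommGroup X] [NormedSpace ℝ X]
    (I1 : X → ℝ) (α : ℝ) (u : X) : ℝ :=
  fderiv ℝ I1 u u - α * I1 u

/-- `h₀ = inf_{u ≠ 0} sup_{t > 0} H(t u)`. -/
noncomputable def groundLevelH {X : Type*} [NormedAddCommGroup X] [NormedSpace ℝ X]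
    (I1 : X → ℝ) (α : ℝ) : ℝ :=
  sInf ((fun u : X => sSup ((fun t : ℝ => Hfun I1 α (t • u)) '' Set.Ioi (0 : ℝ))) ''
    {u : X | u ≠ 0})

/-- `λ_c(u) = (I₁(u) − c) / I₂(u)`. -/
noncomputable def lamFun {X : Type*} [NormedAddCommGroup X] [NormedSpace ℝ X]
    (I1 I2 : X → ℝ) (c : ℝ) (u : X) : ℝ :=
  (I1 u - c) / I2 u

/-- The Nehari set `N(λ_c) = {u ≠ 0 : H(u) + α c = 0}`. -/
noncomputable def nehariSet {X : Type*} [NormedAddCommGroup X] [NormedSpace ℝ X]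
    (I1 : X → ℝ) (α c : ℝ) : Set X :=
  {u : X | u ≠ 0 ∧ Hfun I1 α u + α * c = 0}

section AuxiliaryLemmas

variable {X : Type*} [NormedAddCommGroup X] [NormedSpace ℝ X]

/-- Chain rule along rays. -/
lemma aux_hasDerivAt_comp_smul {g : X → ℝ} (hg : Differentiable ℝ g) (v : X) (t₀ : ℝ) :
    HasDerivAt (fun t : ℝ => g (t • v)) (fderiv ℝ g (t₀ • v) v) t₀ := by
  have h1 : HasDerivAt (fun t : ℝ => t • v) v t₀ := by
    simpa using (hasDerivAt_id t₀).smul_const v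
  have := (hg (t₀ • v)).hasFDerivAt.comp_hasDerivAt t₀ h1
  exact this

/-- A weakly null sequence is norm-bounded (Banach–Steinhaus in the double dual). -/
lemma aux_bounded_of_weakly_null (z : ℕ → X)
    (hwk : ∀ f : X →L[ℝ] ℝ, Tendsto (fun n => f (z n)) atTop (nhds 0)) :
    ∃ M : ℝ, ∀ n, ‖z n‖ ≤ M := by
  have hpt : ∀ f : X →L[ℝ] ℝ, ∃ C, ∀ n : ℕ,
      ‖(NormedSpace.inclusionInDoubleDual ℝ X (z n)) f‖ ≤ C := by
    intro f
    obtain ⟨C, hC⟩ := ((hwk f).norm).bddAbove_range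
    exact ⟨C, fun n => by simpa using hC ⟨n, rfl⟩⟩
  obtain ⟨C', hC'⟩ := banach_steinhaus
    (g := fun n : ℕ => NormedSpace.inclusionInDoubleDual ℝ X (z n)) hpt
  have hC'0 : 0 ≤ C' := le_trans (norm_nonneg _) (hC' 0)
  refine ⟨C', fun n => NormedSpace.norm_le_dual_bound ℝ (z n) hC'0 fun f => ?_⟩
  calc ‖f (z n)‖ = ‖(NormedSpace.inclusionInDoubleDual ℝ X (z n)) f‖ := rfl
    _ ≤ ‖NormedSpace.inclusionInDoubleDual ℝ X (z n)‖ * ‖f‖ :=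
        ContinuousLinearMap.le_opNorm _ _
    _ ≤ C' * ‖f‖ := mul_le_mul_of_nonneg_right (hC' n) (norm_nonneg f)

/-- `Q(u) = αK(u) − K'(u)u` tends to `0` along bounded weakly null sequences when `K'`
is completely continuous. -/
lemma aux_Q_tendsto_zero (K : X → ℝ) (α : ℝ) (hKC1 : ContDiff ℝ 1 K) (hK0 : K 0 = 0)
    (hKcc : ∀ (u : ℕ → X) (w : X),
      (∀ f : X →L[ℝ] ℝ, Tendsto (fun n => f (u n)) atTop (nhds (f w))) →
      Tendsto (fun n => fderiv ℝ K (u n)) atTop (nhds (fderiv ℝ K w)))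
    (z : ℕ → X) (M : ℝ) (hM : ∀ n, ‖z n‖ ≤ M)
    (hwk : ∀ f : X →L[ℝ] ℝ, Tendsto (fun n => f (z n)) atTop (nhds 0)) :
    Tendsto (fun n => α * K (z n) - fderiv ℝ K (z n) (z n)) atTop (nhds 0) := by
  have hKd : Differentiable ℝ K := hKC1.differentiable one_ne_zero
  have hmvt : ∀ n, ∃ θ ∈ Set.Ioo (0:ℝ) 1, (fderiv ℝ K (θ • z n)) (z n) = K (z n) := by
    intro n
    have hcont : ContinuousOn (fun t : ℝ => K (t • z n)) (Set.Icc 0 1) :=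
      (hKC1.continuous.comp (continuous_id.smul continuous_const)).continuousOn
    obtain ⟨θ, hθ, he⟩ := exists_hasDerivAt_eq_slope (fun t : ℝ => K (t • z n))
      (fun t : ℝ => (fderiv ℝ K (t • z n)) (z n)) zero_lt_one hcont
      (fun t _ => aux_hasDerivAt_comp_smul hKd (z n) t)
    refine ⟨θ, hθ, ?_⟩
    simpa [hK0] using he
  choose θ hθmem hθeq using hmvt
  have hwkθ : ∀ f : X →L[ℝ] ℝ, Tendsto (fun n => f (θ n • z n)) atTop (nhds 0) := by
    intro f
    rw [tendsto_zero_iff_norm_tendsto_zero]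
    refine squeeze_zero (fun n => norm_nonneg _) (fun n => ?_) (by simpa using (hwk f).norm)
    rw [map_smul, norm_smul, Real.norm_eq_abs, abs_of_pos (hθmem n).1]
    exact mul_le_of_le_one_left (norm_nonneg _) (le_of_lt (hθmem n).2)
  have hT1 : Tendsto (fun n => fderiv ℝ K (θ n • z n)) atTop (nhds (fderiv ℝ K 0)) :=
    hKcc _ 0 (by intro f; simpa using hwkθ f)
  have hT2 : Tendsto (fun n => fderiv ℝ K (z n)) atTop (nhds (fderiv ℝ K 0)) :=
    hKcc _ 0 (by intro f; simpa using hwk f)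
  have key : ∀ (T : ℕ → X →L[ℝ] ℝ), Tendsto T atTop (nhds (fderiv ℝ K 0)) →
      Tendsto (fun n => (T n - fderiv ℝ K 0) (z n)) atTop (nhds 0) := by
    intro T hT
    rw [tendsto_zero_iff_norm_tendsto_zero]
    refine squeeze_zero (fun n => norm_nonneg _) (fun n => ?_)
      (by simpa using ((tendsto_iff_norm_sub_tendsto_zero.mp hT).mul_const M))
    calc ‖(T n - fderiv ℝ K 0) (z n)‖ ≤ ‖T n - fderiv ℝ K 0‖ * ‖z n‖ :=
          ContinuousLinearMap.le_opNorm _ _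
      _ ≤ ‖T n - fderiv ℝ K 0‖ * M := mul_le_mul_of_nonneg_left (hM n) (norm_nonneg _)
  have ha := key _ hT1
  have hb := key _ hT2
  have hd0 : Tendsto (fun n => (fderiv ℝ K 0) (z n)) atTop (nhds 0) := hwk _
  have hfin := ((ha.const_mul α).sub hb).add (hd0.const_mul (α - 1))
  rw [show α * (0:ℝ) - 0 + (α - 1) * 0 = 0 by ring] at hfin
  refine hfin.congr fun n => ?_
  simp only [ContinuousLinearMap.sub_apply]
  rw [← hθeq n]
  ring

/-- Fermat's rule on fibers: a critical point of the fibering map of `λ_c` lies on the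
Nehari level `H = −αc`. -/
lemma aux_nehari_of_critical (I1 I2 : X → ℝ) (α c : ℝ)
    (hI1C1 : ContDiff ℝ 1 I1)
    (hI2hom : ∀ t : ℝ, 0 < t → ∀ u : X, I2 (t • u) = t ^ α * I2 u)
    {v : X} (hI2v : 0 < I2 v) {t₀ : ℝ} (ht₀ : 0 < t₀)
    (hd : deriv (fun t : ℝ => lamFun I1 I2 c (t • v)) t₀ = 0) :
    Hfun I1 α (t₀ • v) = -(α * c) := by
  set A' := (fderiv ℝ I1 (t₀ • v)) v with hA'
  have hnum : HasDerivAt (fun t : ℝ => I1 (t • v) - c) A' t₀ :=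
    (aux_hasDerivAt_comp_smul (hI1C1.differentiable one_ne_zero) v t₀).sub_const c
  have hden : HasDerivAt (fun t : ℝ => I2 (t • v)) (α * t₀ ^ (α - 1) * I2 v) t₀ := by
    have hex : HasDerivAt (fun t : ℝ => t ^ α * I2 v) (α * t₀ ^ (α - 1) * I2 v) t₀ :=
      (Real.hasDerivAt_rpow_const (Or.inl (ne_of_gt ht₀))).mul_const (I2 v)
    have heq : (fun t : ℝ => I2 (t • v)) =ᶠ[nhds t₀] fun t : ℝ => t ^ α * I2 v := by
      filter_upwards [eventually_gt_nhds ht₀] with t ht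
      exact hI2hom t ht v
    exact hex.congr_of_eventuallyEq heq
  have hpos : 0 < I2 (t₀ • v) := by
    rw [hI2hom t₀ ht₀ v]; exact mul_pos (Real.rpow_pos_of_pos ht₀ α) hI2v
  have hq : HasDerivAt (fun t : ℝ => lamFun I1 I2 c (t • v))
      ((A' * I2 (t₀ • v) - (I1 (t₀ • v) - c) * (α * t₀ ^ (α - 1) * I2 v)) / I2 (t₀ • v) ^ 2)
      t₀ := hnum.div hden (ne_of_gt hpos)
  rw [hq.deriv] at hd
  have hNum : A' * I2 (t₀ • v) - (I1 (t₀ • v) - c) * (α * t₀ ^ (α - 1) * I2 v) = 0 :=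
    (div_eq_zero_iff.mp hd).resolve_right (pow_ne_zero 2 (ne_of_gt hpos))
  rw [hI2hom t₀ ht₀ v] at hNum
  have e : t₀ ^ α = t₀ ^ (α - 1) * t₀ := by
    have e' := Real.rpow_add_one (ne_of_gt ht₀) (α - 1)
    rw [show α - 1 + 1 = α from by ring] at e'
    exact e'
  have hk : (0:ℝ) < t₀ ^ (α - 1) * I2 v :=
    mul_pos (Real.rpow_pos_of_pos ht₀ _) hI2v
  have h2 : (t₀ * A' - α * (I1 (t₀ • v) - c)) * (t₀ ^ (α - 1) * I2 v) = 0 := by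
    linear_combination hNum - A' * I2 v * e
  have key : t₀ * A' - α * (I1 (t₀ • v) - c) = 0 :=
    (mul_eq_zero.mp h2).resolve_right (ne_of_gt hk)
  have happ : (fderiv ℝ I1 (t₀ • v)) (t₀ • v) = t₀ * A' := by
    rw [map_smul, smul_eq_mul]
  simp only [Hfun]
  rw [happ]
  linarith

/-- Euler-type identity for `J(u) = ‖u‖^β/β + A(u)` with `A` homogeneous of degree `β'`. -/
lemma aux_euler_formula (J : X → ℝ) (Afn : X → ℝ) (β β' : ℝ)
    (hJC1 : ContDiff ℝ 1 J) (hβ : β ≠ 0)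
    (hJdef : ∀ u : X, J u = ‖u‖ ^ β / β + Afn u)
    (hAhom : ∀ t : ℝ, 0 < t → ∀ u : X, Afn (t • u) = t ^ β' * Afn u)
    (u : X) : fderiv ℝ J u u = ‖u‖ ^ β + β' * Afn u := by
  have h1 : HasDerivAt (fun t : ℝ => J (t • u)) (fderiv ℝ J u u) 1 := by
    simpa using aux_hasDerivAt_comp_smul (hJC1.differentiable one_ne_zero) u 1
  have h2 : HasDerivAt (fun t : ℝ => t ^ β * (‖u‖ ^ β / β) + t ^ β' * Afn u)
      (β * (1:ℝ) ^ (β - 1) * (‖u‖ ^ β / β) + β' * (1:ℝ) ^ (β' - 1) * Afn u) 1 :=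
    ((Real.hasDerivAt_rpow_const (Or.inl one_ne_zero)).mul_const _).add
      ((Real.hasDerivAt_rpow_const (Or.inl one_ne_zero)).mul_const _)
  have heq : (fun t : ℝ => J (t • u)) =ᶠ[nhds (1:ℝ)]
      fun t : ℝ => t ^ β * (‖u‖ ^ β / β) + t ^ β' * Afn u := by
    filter_upwards [eventually_gt_nhds zero_lt_one] with t ht
    rw [hJdef (t • u), hAhom t ht u, norm_smul, Real.norm_eq_abs, abs_of_pos ht,
      Real.mul_rpow ht.le (norm_nonneg u)]
    ring
  have h4 := h1.unique (h2.congr_of_eventuallyEq heq)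
  rw [h4, Real.one_rpow, Real.one_rpow, mul_one, mul_one]
  field_simp

end AuxiliaryLemmas

/-- `N⁻(λ_c)` is weakly bounded away from zero: there is no sequence
in `N⁻(λ_c)` converging weakly to `0`. -/
theorem statement_11
    {X : Type*} [NormedAddCommGroup X] [NormedSpace ℝ X] [CompleteSpace X]
    [UniformConvexSpace X]
    (hinf : ¬ FiniteDimensional ℝ X)
    (hnorm : ContDiffOn ℝ 1 (fun x : X => ‖x‖) {x : X | x ≠ 0})
    (I1 I2 : X → ℝ) (α c : ℝ)
    (hI1C1 : ContDiff ℝ 1 I1) (hI2C1 : ContDiff ℝ 1 I2)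
    (hI10 : I1 0 = 0) (hI20 : I2 0 = 0)
    (hI2pos : ∀ u : X, u ≠ 0 → 0 < I2 u)
    (hα : 1 < α)
    (hI2hom : ∀ t : ℝ, 0 < t → ∀ u : X, I2 (t • u) = t ^ α * I2 u)
    -- `I₂'` is completely continuous
    (hI2cc : ∀ (u : ℕ → X) (w : X),
      (∀ f : X →L[ℝ] ℝ, Tendsto (fun n => f (u n)) atTop (nhds (f w))) →
      Tendsto (fun n => fderiv ℝ I2 (u n)) atTop (nhds (fderiv ℝ I2 w)))
    -- (F1)
    (s : X → ℝ)
    (hF1pos : ∀ u : X, u ≠ 0 → 0 < s u)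
    (hF1inc : ∀ u : X, u ≠ 0 →
      StrictMonoOn (fun t : ℝ => Hfun I1 α (t • u)) (Set.Ioc 0 (s u)))
    (hF1dec : ∀ u : X, u ≠ 0 →
      StrictAntiOn (fun t : ℝ => Hfun I1 α (t • u)) (Set.Ici (s u)))
    (hF1unif : ∀ W : Set X, W ⊆ {u : X | u ≠ 0} → IsCompact (toWeakSpace ℝ X '' W) →
      ∀ M : ℝ, ∃ T : ℝ, ∀ t : ℝ, T ≤ t → ∀ u ∈ W, Hfun I1 α (t • u) < M)
    -- `0 < −αc < h₀`
        -- (F2): I₁ = J − K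
    (J K : X → ℝ) (C1 C2 β ηe : ℝ)
    (hJC1 : ContDiff ℝ 1 J) (hKC1 : ContDiff ℝ 1 K)
    (hI1JK : ∀ u : X, I1 u = J u - K u)
    -- `K'` is completely continuous
    (hKcc : ∀ (u : ℕ → X) (w : X),
      (∀ f : X →L[ℝ] ℝ, Tendsto (fun n => f (u n)) atTop (nhds (f w))) →
      Tendsto (fun n => fderiv ℝ K (u n)) atTop (nhds (fderiv ℝ K w)))
    (hC1 : 0 < C1) (hC2 : 0 < C2) (hβα : α ≤ β) (hηe : 1 < ηe)
    (hJlb : ∀ u : X, C1 * ‖u‖ ^ β ≤ J u)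
    (hJmono : ∀ u v : X,
      C2 * ((‖u‖ ^ (ηe - 1) - ‖v‖ ^ (ηe - 1)) * (‖u‖ - ‖v‖)) ≤
        (fderiv ℝ J u - fderiv ℝ J v) (u - v))
    -- J(u) = ‖u‖^β/β + A(u) with A nonnegative, bounded on bounded sets, β'-homogeneous
    (Afn : X → ℝ) (β' p C : ℝ)
    (hJdef : ∀ u : X, J u = ‖u‖ ^ β / β + Afn u)
    (hA0 : ∀ u : X, 0 ≤ Afn u)
    (hAbdd : ∀ R : ℝ, ∃ M : ℝ, ∀ u : X, ‖u‖ ≤ R → Afn u ≤ M)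
    (hAhom : ∀ t : ℝ, 0 < t → ∀ u : X, Afn (t • u) = t ^ β' * Afn u)
    (hβ' : α ≤ β')
    -- Q(u) = αK(u) − K'(u)u ≥ −C‖u‖^p with p > β
    (hp : β < p) (hC : 0 < C)
    (hQlb : ∀ u : X, -C * ‖u‖ ^ p ≤ α * K u - fderiv ℝ K u u)
    -- H ∈ C¹(X)
    (hHC1 : ContDiff ℝ 1 (Hfun I1 α))
    -- the two critical points of the fibering maps of λ_c
    (tcp tcm : X → ℝ)
    (hcrit : ∀ u : X, u ≠ 0 →
      0 < tcp u ∧ tcp u < tcm u ∧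
      IsLocalMin (fun t : ℝ => lamFun I1 I2 c (t • u)) (tcp u) ∧
      IsLocalMax (fun t : ℝ => lamFun I1 I2 c (t • u)) (tcm u) ∧
      (∀ t : ℝ, 0 < t →
        (deriv (fun r : ℝ => lamFun I1 I2 c (r • u)) t = 0 ↔ t = tcp u ∨ t = tcm u)))
    (hc0 : 0 < -(α * c)) (hch : -(α * c) < groundLevelH I1 α) :
    ¬ ∃ u : ℕ → X, (∀ n, u n ∈ (fun v : X => tcm v • v) '' sphere (0 : X) 1) ∧
      ∀ f : X →L[ℝ] ℝ, Tendsto (fun n => f (u n)) atTop (nhds 0) := by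
  rintro ⟨u, hu, hwk⟩
  choose v hv huv using hu
  have hv1 : ∀ n, ‖v n‖ = 1 := fun n => mem_sphere_zero_iff_norm.mp (hv n)
  have hvne : ∀ n, v n ≠ 0 := by
    intro n h
    have := hv1 n
    rw [h, norm_zero] at this
    exact one_ne_zero this.symm
  have hαpos : (0:ℝ) < α := lt_trans zero_lt_one hα
  have hβpos : (0:ℝ) < β := lt_of_lt_of_le hαpos hβα
  have hβ'pos : (0:ℝ) < β' := lt_of_lt_of_le hαpos hβ'
  have hβne : β ≠ 0 := ne_of_gt hβpos
  have hJd : Differentiable ℝ J := hJC1.differentiable one_ne_zero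
  have hKd : Differentiable ℝ K := hKC1.differentiable one_ne_zero
  have hT0 : ∀ n, 0 < tcm (v n) :=
    fun n => lt_trans (hcrit (v n) (hvne n)).1 (hcrit (v n) (hvne n)).2.1
  have hS0 : ∀ n, 0 < s (v n) := fun n => hF1pos (v n) (hvne n)
  have hux : ∀ n, u n = tcm (v n) • v n := fun n => (huv n).symm
  -- Nehari identities at the two critical points
  have hHm : ∀ n, Hfun I1 α (tcm (v n) • v n) = -(α * c) := fun n =>
    aux_nehari_of_critical I1 I2 α c hI1C1 hI2hom (hI2pos _ (hvne n)) (hT0 n)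
      (hcrit (v n) (hvne n)).2.2.2.1.deriv_eq_zero
  have hHp : ∀ n, Hfun I1 α (tcp (v n) • v n) = -(α * c) := fun n =>
    aux_nehari_of_critical I1 I2 α c hI1C1 hI2hom (hI2pos _ (hvne n)) (hcrit (v n) (hvne n)).1
      (hcrit (v n) (hvne n)).2.2.1.deriv_eq_zero
  -- the `N⁻` point is beyond the maximum of the fiber of `H`
  have hST : ∀ n, s (v n) < tcm (v n) := by
    intro n
    by_contra hle
    push_neg at hle
    have h1 := (hcrit (v n) (hvne n)).1
    have h2 := (hcrit (v n) (hvne n)).2.1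
    have h3 := hF1inc (v n) (hvne n) (Set.mem_Ioc.mpr ⟨h1, le_of_lt (lt_of_lt_of_le h2 hle)⟩)
      (Set.mem_Ioc.mpr ⟨lt_trans h1 h2, hle⟩) h2
    simp only [hHp n, hHm n] at h3
    exact lt_irrefl _ h3
  -- norms
  have hunorm : ∀ n, ‖u n‖ = tcm (v n) := by
    intro n
    rw [hux n, norm_smul, Real.norm_eq_abs, abs_of_pos (hT0 n), hv1 n, mul_one]
  have hxnorm : ∀ n, ‖s (v n) • v n‖ = s (v n) := by
    intro n
    rw [norm_smul, Real.norm_eq_abs, abs_of_pos (hS0 n), hv1 n, mul_one]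
  -- the fiber-maximum points are also weakly null
  have hwkx : ∀ f : X →L[ℝ] ℝ, Tendsto (fun n => f (s (v n) • v n)) atTop (nhds 0) := by
    intro f
    rw [tendsto_zero_iff_norm_tendsto_zero]
    refine squeeze_zero (fun n => norm_nonneg _) (fun n => ?_) (by simpa using (hwk f).norm)
    have hxr : s (v n) • v n = (s (v n) / tcm (v n)) • u n := by
      rw [hux n, smul_smul, div_mul_cancel₀ _ (ne_of_gt (hT0 n))]
    rw [hxr, map_smul, norm_smul, Real.norm_eq_abs,
      abs_of_pos (div_pos (hS0 n) (hT0 n))]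
    exact mul_le_of_le_one_left (norm_nonneg _)
      (div_le_one_of_le₀ (le_of_lt (hST n)) (hT0 n).le)
  -- boundedness
  obtain ⟨M, hM⟩ := aux_bounded_of_weakly_null u hwk
  have hMx : ∀ n, ‖s (v n) • v n‖ ≤ M := by
    intro n
    rw [hxnorm n]
    exact le_trans (le_of_lt (hST n)) (by rw [← hunorm n]; exact hM n)
  -- values at 0
  have hA00 : Afn 0 = 0 := by
    have h2 := hAhom 2 (by norm_num) 0
    rw [smul_zero] at h2
    have h21 : (1:ℝ) < (2:ℝ) ^ β' :=
      (Real.one_lt_rpow_iff_of_pos (by norm_num)).mpr (Or.inl ⟨one_lt_two, hβ'pos⟩)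
    have h3 : ((2:ℝ) ^ β' - 1) * Afn 0 = 0 := by linear_combination -h2
    exact (mul_eq_zero.mp h3).resolve_left (ne_of_gt (by linarith))
  have hJ0 : J 0 = 0 := by
    rw [hJdef 0, hA00, norm_zero, Real.zero_rpow hβne]
    simp
  have hK0 : K 0 = 0 := by
    have := hI1JK 0
    rw [hI10, hJ0] at this
    linarith
  -- `Q` tends to zero along both sequences
  have hQu := aux_Q_tendsto_zero K α hKC1 hK0 hKcc u M hM hwk
  have hQx := aux_Q_tendsto_zero K α hKC1 hK0 hKcc (fun n => s (v n) • v n) M hMx hwkx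
  -- decomposition of `H`
  have hHrep : ∀ w : X, Hfun I1 α w =
      (‖w‖ ^ β + β' * Afn w - α * J w) + (α * K w - (fderiv ℝ K w) w) := by
    intro w
    have h1 : fderiv ℝ I1 w = fderiv ℝ J w - fderiv ℝ K w := by
      have hI : I1 = fun y => J y - K y := funext hI1JK
      rw [hI]
      exact fderiv_sub (hJd w) (hKd w)
    have h2 : (fderiv ℝ J w) w = ‖w‖ ^ β + β' * Afn w :=
      aux_euler_formula J Afn β β' hJC1 hβne hJdef hAhom w
    simp only [Hfun]
    rw [h1, ContinuousLinearMap.sub_apply, h2, hI1JK w]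
    ring
  -- monotonicity of the `P`-part along the rays
  have hPmono : ∀ n, (‖s (v n) • v n‖ ^ β + β' * Afn (s (v n) • v n) - α * J (s (v n) • v n)) ≤
      (‖u n‖ ^ β + β' * Afn (u n) - α * J (u n)) := by
    intro n
    have hAx : Afn (s (v n) • v n) = (s (v n)) ^ β' * Afn (v n) := hAhom _ (hS0 n) _
    have hAu : Afn (u n) = (tcm (v n)) ^ β' * Afn (v n) := by
      rw [hux n]; exact hAhom _ (hT0 n) _
    have hb : (s (v n)) ^ β ≤ (tcm (v n)) ^ β :=
      Real.rpow_le_rpow (hS0 n).le (hST n).le hβpos.le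
    have hb' : (s (v n)) ^ β' ≤ (tcm (v n)) ^ β' :=
      Real.rpow_le_rpow (hS0 n).le (hST n).le hβ'pos.le
    have hcoef : α / β ≤ 1 := (div_le_one hβpos).mpr hβα
    have hAv := hA0 (v n)
    have id1 : ∀ r : ℝ, r ^ β + β' * (r ^ β' * Afn (v n)) - α * (r ^ β / β + r ^ β' * Afn (v n))
        = (1 - α / β) * r ^ β + (β' - α) * (r ^ β' * Afn (v n)) := by
      intro r
      field_simp
      ring
    rw [hJdef (s (v n) • v n), hJdef (u n), hxnorm n, hunorm n, hAx, hAu,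
      id1 (s (v n)), id1 (tcm (v n))]
    have e1 : (1 - α / β) * (s (v n)) ^ β ≤ (1 - α / β) * (tcm (v n)) ^ β :=
      mul_le_mul_of_nonneg_left hb (by linarith)
    have e2 : (β' - α) * ((s (v n)) ^ β' * Afn (v n)) ≤
        (β' - α) * ((tcm (v n)) ^ β' * Afn (v n)) :=
      mul_le_mul_of_nonneg_left (mul_le_mul_of_nonneg_right hb' hAv) (by linarith)
    linarith
  -- the fiber maximum dominates all fiber values
  have hub : ∀ (w : X), w ≠ 0 → ∀ t : ℝ, 0 < t →
      Hfun I1 α (t • w) ≤ Hfun I1 α (s w • w) := by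
    intro w hw t ht
    rcases le_or_gt t (s w) with h | h
    · exact (hF1inc w hw).monotoneOn (Set.mem_Ioc.mpr ⟨ht, h⟩)
        (Set.mem_Ioc.mpr ⟨hF1pos w hw, le_rfl⟩) h
    · exact le_of_lt ((hF1dec w hw) (Set.mem_Ici.mpr le_rfl) (Set.mem_Ici.mpr h.le) h)
  have hbddA : ∀ (w : X), w ≠ 0 →
      ∀ y ∈ (fun t : ℝ => Hfun I1 α (t • w)) '' Set.Ioi (0:ℝ), y ≤ Hfun I1 α (s w • w) := by
    rintro w hw y ⟨t, ht, rfl⟩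
    exact hub w hw t ht
  have hH0 : Hfun I1 α (0 : X) = 0 := by simp [Hfun, hI10]
  have hsup_ge0 : ∀ (w : X), w ≠ 0 →
      0 ≤ sSup ((fun t : ℝ => Hfun I1 α (t • w)) '' Set.Ioi (0:ℝ)) := by
    intro w hw
    have hcb : BddAbove ((fun t : ℝ => Hfun I1 α (t • w)) '' Set.Ioi (0:ℝ)) :=
      ⟨_, fun y hy => hbddA w hw y hy⟩
    have hseq : Tendsto (fun k : ℕ => Hfun I1 α ((1 / (k + 1) : ℝ) • w)) atTop (nhds 0) := by
      have h1 : Tendsto (fun k : ℕ => (1 / (k + 1 : ℝ)) • w) atTop (nhds ((0:ℝ) • w)) :=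
        tendsto_one_div_add_atTop_nhds_zero_nat.smul_const w
      have h2 := (hHC1.continuous.tendsto _).comp h1
      simpa [hH0, Function.comp_def] using h2
    refine le_of_tendsto hseq (Filter.Eventually.of_forall fun k => ?_)
    exact le_csSup hcb ⟨1 / (k + 1 : ℝ), Set.mem_Ioi.mpr (by positivity), rfl⟩
  have hglb : ∀ n, groundLevelH I1 α ≤ Hfun I1 α (s (v n) • v n) := by
    intro n
    have h1 : groundLevelH I1 α ≤
        sSup ((fun t : ℝ => Hfun I1 α (t • v n)) '' Set.Ioi (0:ℝ)) := by
      unfold groundLevelH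
      refine csInf_le ⟨0, ?_⟩ ⟨v n, hvne n, rfl⟩
      rintro y ⟨w, hw, rfl⟩
      exact hsup_ge0 w hw
    refine le_trans h1 (csSup_le ⟨_, ⟨1, Set.mem_Ioi.mpr one_pos, rfl⟩⟩ (hbddA (v n) (hvne n)))
  -- final contradiction
  have hfinal : ∀ n, groundLevelH I1 α + α * c ≤
      (α * K (s (v n) • v n) - (fderiv ℝ K (s (v n) • v n)) (s (v n) • v n)) -
      (α * K (u n) - (fderiv ℝ K (u n)) (u n)) := by
    intro n
    have h1 : groundLevelH I1 α ≤ Hfun I1 α (s (v n) • v n) := hglb n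
    have h2 := hHrep (s (v n) • v n)
    have h3 := hHrep (u n)
    have h4 : Hfun I1 α (u n) = -(α * c) := by rw [hux n]; exact hHm n
    have h5 := hPmono n
    linarith
  have hQdiff : Tendsto (fun n =>
      (α * K (s (v n) • v n) - (fderiv ℝ K (s (v n) • v n)) (s (v n) • v n)) -
      (α * K (u n) - (fderiv ℝ K (u n)) (u n))) atTop (nhds 0) := by
    simpa using hQx.sub hQu
  have hle : groundLevelH I1 α + α * c ≤ 0 := ge_of_tendsto' hQdiff hfinal
  linarith
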